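/- arXiv:2209.04625 — 5 statements merged into one kernel-verified Lean document; each statement's English description precedes it below -/
import Mathlib

section
/- Let n ≥ 2, let p ∈ (1, ∞) be a real number, set c_p = p/(p + n − 2), fix x̄ ∈ ℝⁿ and R > 0, and define u(x) = (c_p/2)(R² − ‖x − x̄‖²). Then for every x ≠ x̄, the divergence of the vector field F(y) = ‖∇u(y)‖^{p−2} ∇u(y) at x equals −p·(c_p ‖x − x̄‖)^{p−2}; equivalently, (1/p)·‖∇u(x)‖^{2−p} · div F(x) = −1, so that u satisfies the divergence-form equation −(1/p)|Du|^{2−p} div(|Du|^{p−2} Du) = 1 classically away from the center. -/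
open Filter Topology Metric RealInnerProductSpace

/-- The divergence of a vector field `F` at `x`: the trace of its Fréchet derivative,
computed via the standard orthonormal basis. -/
noncomputable def diverg {n : ℕ}
    (F : EuclideanSpace ℝ (Fin n) → EuclideanSpace ℝ (Fin n))
    (x : EuclideanSpace ℝ (Fin n)) : ℝ :=
  ∑ i : Fin n,
    ⟪fderiv ℝ F x (EuclideanSpace.single i 1),
      (EuclideanSpace.single i 1 : EuclideanSpace ℝ (Fin n))⟫

section aux

variable {n : ℕ}

lemma aux_sq_rpow {t : ℝ} (ht : 0 ≤ t) (q : ℝ) : (t ^ 2) ^ (q / 2) = t ^ q := by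
  rw [← Real.rpow_natCast t 2, ← Real.rpow_mul ht]
  rw [show ((2 : ℕ) : ℝ) * (q / 2) = q by push_cast; ring]

lemma aux_norm_sq_fderiv (xbar y : EuclideanSpace ℝ (Fin n)) :
    HasFDerivAt (fun z : EuclideanSpace ℝ (Fin n) => ‖z - xbar‖ ^ 2)
      (2 • (innerSL ℝ (y - xbar))) y := by
  have := ((hasFDerivAt_id y).sub_const xbar).norm_sq
  simpa using this

end aux

/-- The radial function `u(x) = (c_p/2)(R² − ‖x − x̄‖²)` satisfies the divergence-form equation
`−(1/p)|Du|^{2−p} div(|Du|^{p−2} Du) = 1` classically away from the center, for `1 < p < ∞`. -/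
theorem radial_solution_divergence_form
    {n : ℕ} (hn : 2 ≤ n) (p : ℝ) (hp : 1 < p)
    (c : ℝ) (hc : c = p / (p + n - 2))
    (xbar : EuclideanSpace ℝ (Fin n)) (R : ℝ) (hR : 0 < R)
    (u : EuclideanSpace ℝ (Fin n) → ℝ)
    (hu : ∀ x, u x = c / 2 * (R ^ 2 - ‖x - xbar‖ ^ 2))
    (F : EuclideanSpace ℝ (Fin n) → EuclideanSpace ℝ (Fin n))
    (hF : ∀ y, F y = ‖gradient u y‖ ^ (p - 2) • gradient u y)
    (x : EuclideanSpace ℝ (Fin n)) (hx : x ≠ xbar) :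
    diverg F x = -p * (c * ‖x - xbar‖) ^ (p - 2) ∧
      1 / p * ‖gradient u x‖ ^ (2 - p) * diverg F x = -1 := by
  have hn2 : (2 : ℝ) ≤ (n : ℝ) := by exact_mod_cast hn
  have hpn : 0 < p + n - 2 := by linarith
  have hc0 : 0 < c := by rw [hc]; exact div_pos (by linarith) hpn
  have hcp : c * (p + n - 2) = p := by
    rw [hc]; field_simp
  set a : EuclideanSpace ℝ (Fin n) := x - xbar with ha
  have ha0 : a ≠ 0 := sub_ne_zero.mpr hx
  have hr : 0 < ‖a‖ := norm_pos_iff.mpr ha0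
  -- gradient of u
  have hgrad : ∀ y, HasGradientAt u ((-c) • (y - xbar)) y := by
    intro y
    rw [hasGradientAt_iff_hasFDerivAt]
    have hfun : u = fun z => c / 2 * R ^ 2 + -(c / 2) * ‖z - xbar‖ ^ 2 := by
      funext z; rw [hu z]; ring
    have h2 : HasFDerivAt u ((-(c / 2)) • (2 • (innerSL ℝ (y - xbar)))) y := by
      rw [hfun]
      exact ((aux_norm_sq_fderiv xbar y).const_mul (-(c / 2))).const_add (c / 2 * R ^ 2)
    refine h2.congr_fderiv (Eq.symm ?_)
    ext v
    simp [InnerProductSpace.toDual_apply_apply, real_inner_smul_left]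
    try ring
  have gu : ∀ y, gradient u y = (-c) • (y - xbar) := fun y => (hgrad y).gradient
  have hng : ∀ y, ‖gradient u y‖ = c * ‖y - xbar‖ := by
    intro y
    rw [gu, norm_smul, Real.norm_eq_abs, abs_neg, abs_of_pos hc0]
  have hcc : c ^ (p - 1) = c ^ (p - 2) * c := by
    rw [show p - 1 = p - 2 + 1 by ring, Real.rpow_add_one hc0.ne']
  -- rewrite F
  have hFeq : F = fun y => (-(c ^ (p - 1) * ‖y - xbar‖ ^ (p - 2))) • (y - xbar) := by
    funext y
    rw [hF, hng, gu, smul_smul]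
    congr 1
    rw [Real.mul_rpow hc0.le (norm_nonneg _), hcc]
    ring
  -- derivative of F at x
  set K : ℝ := (p - 2) / 2 * (‖a‖ ^ 2) ^ ((p - 2) / 2 - 1) with hK
  have hφ : HasFDerivAt (fun y => -(c ^ (p - 1) * ‖y - xbar‖ ^ (p - 2)))
      ((-(c ^ (p - 1)) * K) • (2 • (innerSL ℝ a))) x := by
    have h1 := (aux_norm_sq_fderiv xbar x).rpow_const
      (p := (p - 2) / 2) (Or.inl (by positivity))
    have h2 := h1.const_mul (-(c ^ (p - 1)))
    have heq : (fun y : EuclideanSpace ℝ (Fin n) =>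
        -(c ^ (p - 1)) * (‖y - xbar‖ ^ 2) ^ ((p - 2) / 2))
        = fun y => -(c ^ (p - 1) * ‖y - xbar‖ ^ (p - 2)) := by
      funext y
      rw [aux_sq_rpow (norm_nonneg _)]
      ring
    rw [heq] at h2
    refine h2.congr_fderiv (Eq.symm ?_)
    rw [smul_smul]
    try congr 1
    try rw [hK]
    try ring
  have hid : HasFDerivAt (fun y : EuclideanSpace ℝ (Fin n) => y - xbar)
      (ContinuousLinearMap.id ℝ _) x := by
    simpa using (hasFDerivAt_id x).sub_const xbar
  have hD := hφ.smul hid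
  have hfd : fderiv ℝ F x =
      (-(c ^ (p - 1) * ‖a‖ ^ (p - 2))) • ContinuousLinearMap.id ℝ _ +
        ((-(c ^ (p - 1)) * K) • (2 • (innerSL ℝ a))).smulRight a := by
    rw [hFeq]
    exact hD.fderiv
  -- compute the divergence
  have hsum : ∑ i : Fin n, a i * a i = ‖a‖ ^ 2 := by
    rw [EuclideanSpace.norm_eq, Real.sq_sqrt (by positivity)]
    simp [sq_abs, sq]
  have hterm : ∀ i : Fin n,
      (⟪fderiv ℝ F x (EuclideanSpace.single i 1),
        (EuclideanSpace.single i 1 : EuclideanSpace ℝ (Fin n))⟫ : ℝ)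
      = -(c ^ (p - 1) * ‖a‖ ^ (p - 2)) + (-(c ^ (p - 1)) * K) * 2 * (a i * a i) := by
    intro i
    rw [hfd]
    simp [EuclideanSpace.inner_single_right, EuclideanSpace.inner_single_left,
      real_inner_smul_left, inner_add_left, ContinuousLinearMap.smulRight_apply]
    try ring
  have hdiv : diverg F x =
      (n : ℝ) * (-(c ^ (p - 1) * ‖a‖ ^ (p - 2))) +
        (-(c ^ (p - 1)) * K) * 2 * ‖a‖ ^ 2 := by
    rw [diverg]
    simp only [hterm]
    rw [Finset.sum_add_distrib, Finset.sum_const, Finset.card_univ, Fintype.card_fin,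
      ← Finset.mul_sum, hsum]
    push_cast
    ring
  have hKr : K * ‖a‖ ^ 2 = (p - 2) / 2 * ‖a‖ ^ (p - 2) := by
    rw [hK]
    have h1 : (‖a‖ ^ 2) ^ ((p - 2) / 2 - 1) * ‖a‖ ^ 2
        = (‖a‖ ^ 2) ^ ((p - 2) / 2) := by
      rw [← Real.rpow_add_one (by positivity : (‖a‖ ^ 2 : ℝ) ≠ 0) ((p - 2) / 2 - 1)]
      congr 1
      ring
    rw [mul_assoc, h1, aux_sq_rpow (norm_nonneg _)]
  have hdiv2 : diverg F x = -p * (c * ‖a‖) ^ (p - 2) := by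
    rw [hdiv, Real.mul_rpow hc0.le (norm_nonneg _)]
    calc (n : ℝ) * (-(c ^ (p - 1) * ‖a‖ ^ (p - 2))) +
          (-(c ^ (p - 1)) * K) * 2 * ‖a‖ ^ 2
        = -(c ^ (p - 1)) * ((n : ℝ) * ‖a‖ ^ (p - 2) + 2 * (K * ‖a‖ ^ 2)) := by ring
      _ = -(c ^ (p - 1)) * ((n : ℝ) * ‖a‖ ^ (p - 2)
            + (p - 2) * ‖a‖ ^ (p - 2)) := by rw [hKr]; ring
      _ = -(c ^ (p - 2)) * (c * (p + n - 2)) * ‖a‖ ^ (p - 2) := by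
          rw [hcc]; ring
      _ = -p * (c ^ (p - 2) * ‖a‖ ^ (p - 2)) := by rw [hcp]; ring
  refine ⟨hdiv2, ?_⟩
  rw [hdiv2, hng, ← ha]
  have hcr : 0 < c * ‖a‖ := mul_pos hc0 hr
  have hmul : (c * ‖a‖) ^ (2 - p) * (c * ‖a‖) ^ (p - 2) = 1 := by
    rw [← Real.rpow_add hcr]
    norm_num
  have hp0 : p ≠ 0 := by linarith
  calc 1 / p * (c * ‖a‖) ^ (2 - p) * (-p * (c * ‖a‖) ^ (p - 2))
      = -((c * ‖a‖) ^ (2 - p) * (c * ‖a‖) ^ (p - 2)) * (p / p) := by ring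
    _ = -1 := by rw [div_self hp0, hmul]; ring
end

section
/- Let n ≥ 1 and let Ω ⊆ ℝⁿ be a bounded open set. Let u be continuous on the closure of Ω, twice differentiable on Ω with Δu(x) = −2 for all x ∈ Ω, and suppose u ≥ 0 on the frontier of Ω. If x̄ ∈ ℝⁿ and R > 0 are such that the open ball B(x̄, R) is contained in Ω, then u(x) ≥ (R² − ‖x − x̄‖²)/n for every x in the closed ball of radius R about x̄. -/
open Filter Topology Metric InnerProductSpace

/-- The Laplacian of `u` at `x`: the trace of the Hessian (second Fréchet derivative),
computed as the sum of the diagonal entries in the standard orthonormal basis. -/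
noncomputable def laplacian {n : ℕ} (u : EuclideanSpace ℝ (Fin n) → ℝ)
    (x : EuclideanSpace ℝ (Fin n)) : ℝ :=
  ∑ i : Fin n, fderiv ℝ (fderiv ℝ u) x (EuclideanSpace.single i 1) (EuclideanSpace.single i 1)

section OneD

/-- 1-D second derivative test at a local minimum. -/
lemma oneD_second_nonneg {g d : ℝ → ℝ} {d2 : ℝ}
    (hd : ∀ᶠ t in 𝓝 (0:ℝ), HasDerivAt g (d t) t)
    (hd2 : HasDerivAt d d2 0) (hmin : IsLocalMin g 0) : 0 ≤ d2 := by
  by_contra hneg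
  push_neg at hneg
  have hd0 : d 0 = 0 := by
    have h1 : deriv g 0 = d 0 := hd.self_of_nhds.deriv
    have h2 := hmin.deriv_eq_zero
    rw [h2] at h1; exact h1.symm
  have hslope : Tendsto (slope d 0) (𝓝[≠] 0) (𝓝 d2) := hasDerivAt_iff_tendsto_slope.1 hd2
  have hev : ∀ᶠ t in 𝓝[>] (0:ℝ), slope d 0 t < 0 :=
    (hslope.eventually (Iio_mem_nhds hneg)).filter_mono
      (nhdsWithin_mono 0 fun t ht => ne_of_gt ht)
  have hd' : ∀ᶠ t in 𝓝[>] (0:ℝ), HasDerivAt g (d t) t := hd.filter_mono nhdsWithin_le_nhds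
  have hm' : ∀ᶠ t in 𝓝[>] (0:ℝ), g 0 ≤ g t :=
    (hmin : ∀ᶠ t in 𝓝 (0:ℝ), g 0 ≤ g t).filter_mono nhdsWithin_le_nhds
  obtain ⟨δ, hδ, hsub⟩ := mem_nhdsGT_iff_exists_Ioc_subset.1
    ((hev.and (hd'.and hm')) : _)
  rw [Set.mem_Ioi] at hδ
  have hanti : StrictAntiOn g (Set.Icc 0 δ) := by
    apply strictAntiOn_of_deriv_neg (convex_Icc 0 δ)
    · intro t ht
      rcases eq_or_ne t 0 with rfl | h0
      · exact hd.self_of_nhds.continuousAt.continuousWithinAt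
      · exact ((hsub ⟨lt_of_le_of_ne ht.1 (Ne.symm h0), ht.2⟩).2.1).continuousAt.continuousWithinAt
    · intro t ht
      rw [interior_Icc] at ht
      have hP := hsub ⟨ht.1, ht.2.le⟩
      rw [hP.2.1.deriv]
      have hs : d t / t < 0 := by
        have := hP.1
        rw [slope_def_field] at this
        simpa [hd0] using this
      have ht0 : (0:ℝ) < t := ht.1
      calc d t = (d t / t) * t := by field_simp
        _ < 0 := mul_neg_of_neg_of_pos hs ht0
  have h1 : g δ < g 0 := hanti ⟨le_refl 0, hδ.le⟩ ⟨hδ.le, le_refl δ⟩ hδ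
  have h2 : g 0 ≤ g δ := (hsub ⟨hδ, le_refl δ⟩).2.2
  linarith

end OneD

section Dir

variable {E : Type*} [NormedAddCommGroup E] [NormedSpace ℝ E]

/-- Directional second derivative is nonnegative at an interior local minimum. -/
lemma dir_second_nonneg {f : E → ℝ} {x0 : E}
    (hd : ∀ᶠ y in 𝓝 x0, DifferentiableAt ℝ f y)
    (hd2 : DifferentiableAt ℝ (fderiv ℝ f) x0)
    (hmin : IsLocalMin f x0) (e : E) :
    0 ≤ fderiv ℝ (fderiv ℝ f) x0 e e := by
  set L : ℝ → E := fun t => x0 + t • e with hLdef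
  have hL0 : L 0 = x0 := by simp [hLdef]
  have hLd : ∀ t : ℝ, HasDerivAt L e t := fun t => by
    simpa [hLdef] using ((hasDerivAt_id t).smul_const e).const_add x0
  have hLc : Continuous L := by
    have : ∀ t, ContinuousAt L t := fun t => (hLd t).continuousAt
    exact continuous_iff_continuousAt.2 this
  have hTend : Tendsto L (𝓝 0) (𝓝 x0) := hL0 ▸ hLc.continuousAt
  have hdL : ∀ᶠ t in 𝓝 (0:ℝ), DifferentiableAt ℝ f (L t) := hTend.eventually hd
  have hg : ∀ᶠ t in 𝓝 (0:ℝ), HasDerivAt (fun s => f (L s)) (fderiv ℝ f (L t) e) t :=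
    hdL.mono fun t ht => ht.hasFDerivAt.comp_hasDerivAt t (hLd t)
  have hc : HasDerivAt (fun t => fderiv ℝ f (L t)) (fderiv ℝ (fderiv ℝ f) x0 e) 0 := by
    have h2 : HasFDerivAt (fderiv ℝ f) (fderiv ℝ (fderiv ℝ f) x0) (L 0) := by
      rw [hL0]; exact hd2.hasFDerivAt
    exact h2.comp_hasDerivAt 0 (hLd 0)
  have happ : HasDerivAt (fun t => fderiv ℝ f (L t) e)
      (fderiv ℝ (fderiv ℝ f) x0 e e) 0 := by
    have := hc.clm_apply (hasDerivAt_const (0:ℝ) e)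
    simpa [hL0] using this
  have hgmin : IsLocalMin (fun s => f (L s)) 0 := by
    have := (hL0 ▸ hmin : IsLocalMin f (L 0)).comp_continuous hLc.continuousAt
    exact this
  exact oneD_second_nonneg hg happ hgmin

end Dir

/-- Minimum principle for strict supersolutions of the Laplace equation on a
bounded open set. -/
lemma min_principle {n : ℕ} (S : Set (EuclideanSpace ℝ (Fin n)))
    (hSo : IsOpen S) (hSb : Bornology.IsBounded S)
    (f : EuclideanSpace ℝ (Fin n) → ℝ)
    (hcont : ContinuousOn f (closure S))
    (hdiff : ∀ x ∈ S, DifferentiableAt ℝ f x ∧ DifferentiableAt ℝ (fderiv ℝ f) x)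
    (hlap : ∀ x ∈ S, laplacian f x < 0)
    (hbdry : ∀ x ∈ frontier S, 0 ≤ f x) :
    ∀ x ∈ closure S, 0 ≤ f x := by
  rcases S.eq_empty_or_nonempty with rfl | hne
  · simp
  have hcomp : IsCompact (closure S) := hSb.isCompact_closure
  obtain ⟨x0, hx0, hmin⟩ := hcomp.exists_isMinOn hne.closure hcont
  intro x hx
  have h0 : 0 ≤ f x0 := by
    have hx0' : x0 ∈ interior S ∪ frontier S := by
      rw [← closure_eq_interior_union_frontier]; exact hx0
    rcases hx0' with h | h
    · rw [hSo.interior_eq] at h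
      exfalso
      have hloc : IsLocalMin f x0 :=
        hmin.isLocalMin (Filter.mem_of_superset (hSo.mem_nhds h) subset_closure)
      have hev : ∀ᶠ y in 𝓝 x0, DifferentiableAt ℝ f y :=
        Filter.eventually_of_mem (hSo.mem_nhds h) fun y hy => (hdiff y hy).1
      have hnn : 0 ≤ laplacian f x0 := by
        unfold laplacian
        exact Finset.sum_nonneg fun i _ => dir_second_nonneg hev (hdiff x0 h).2 hloc _
      exact absurd hnn (not_le.2 (hlap x0 h))
    · exact hbdry x0 h
  exact le_trans h0 (isMinOn_iff.1 hmin x hx)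

section Quad

variable {F : Type*} [NormedAddCommGroup F] [InnerProductSpace ℝ F]

/-- The real inner product as a continuous bilinear map. -/
noncomputable def innerCLM (F : Type*) [NormedAddCommGroup F] [InnerProductSpace ℝ F] :
    F →L[ℝ] F →L[ℝ] ℝ :=
  LinearMap.mkContinuous₂ (innerₗ F) 1 fun x y => by
    simpa using norm_inner_le_norm (𝕜 := ℝ) x y

@[simp] lemma innerCLM_apply (x y : F) : innerCLM F x y = ⟪x, y⟫_ℝ := rfl

/-- Twice the inner product, as a continuous bilinear map: the Hessian of
`y ↦ ⟪y - c, y - c⟫`. -/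
noncomputable def Phi (F : Type*) [NormedAddCommGroup F] [InnerProductSpace ℝ F] :
    F →L[ℝ] F →L[ℝ] ℝ := 2 • innerCLM F

@[simp] lemma Phi_apply (x y : F) : Phi F x y = 2 * ⟪x, y⟫_ℝ := by
  simp [Phi, innerCLM_apply]

lemma hasFDerivAt_quad (c : F) (y : F) :
    HasFDerivAt (fun z => ⟪z - c, z - c⟫_ℝ) (Phi F (y - c)) y := by
  have h1 : HasFDerivAt (fun z : F => z - c) (ContinuousLinearMap.id ℝ F) y :=
    (hasFDerivAt_id y).sub_const c
  have h2 := h1.inner ℝ h1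
  refine h2.congr_fderiv ?_
  ext v
  simp only [Phi_apply, ContinuousLinearMap.comp_apply, ContinuousLinearMap.prod_apply,
    ContinuousLinearMap.id_apply, fderivInnerCLM_apply]
  rw [real_inner_comm v (y - c)]
  ring

lemma hasFDerivAt_quad' (c : F) (x : F) :
    HasFDerivAt (fun y => Phi F (y - c)) (Phi F) x := by
  have h1 : HasFDerivAt (fun z : F => z - c) (ContinuousLinearMap.id ℝ F) x :=
    (hasFDerivAt_id x).sub_const c
  exact (Phi F).hasFDerivAt.comp x h1

end Quad

/-- Calculus of the perturbation `w y = u y + c * ⟪y-x̄, y-x̄⟫ + b` on an open set. -/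
lemma shift_calc {n : ℕ} (Ω : Set (EuclideanSpace ℝ (Fin n))) (hΩo : IsOpen Ω)
    (u : EuclideanSpace ℝ (Fin n) → ℝ)
    (hdiff : ∀ x ∈ Ω, DifferentiableAt ℝ u x ∧ DifferentiableAt ℝ (fderiv ℝ u) x)
    (c b : ℝ) (xbar : EuclideanSpace ℝ (Fin n)) {x : EuclideanSpace ℝ (Fin n)} (hx : x ∈ Ω) :
    DifferentiableAt ℝ (fun y => u y + c * ⟪y - xbar, y - xbar⟫_ℝ + b) x ∧
    DifferentiableAt ℝ (fderiv ℝ (fun y => u y + c * ⟪y - xbar, y - xbar⟫_ℝ + b)) x ∧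
    laplacian (fun y => u y + c * ⟪y - xbar, y - xbar⟫_ℝ + b) x
      = laplacian u x + c * (2 * n) := by
  set w : EuclideanSpace ℝ (Fin n) → ℝ := fun y => u y + c * ⟪y - xbar, y - xbar⟫_ℝ + b with hw
  have hwD : ∀ y ∈ Ω, HasFDerivAt w (fderiv ℝ u y + c • Phi _ (y - xbar)) y := by
    intro y hy
    exact (((hdiff y hy).1.hasFDerivAt.add ((hasFDerivAt_quad xbar y).const_mul c)).add_const b)
  have hfd : ∀ y ∈ Ω, fderiv ℝ w y = fderiv ℝ u y + c • Phi _ (y - xbar) :=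
    fun y hy => (hwD y hy).fderiv
  have hev : fderiv ℝ w =ᶠ[𝓝 x] fun y => fderiv ℝ u y + c • Phi _ (y - xbar) :=
    Filter.eventually_of_mem (hΩo.mem_nhds hx) hfd
  have hD2 : HasFDerivAt (fun y => fderiv ℝ u y + c • Phi _ (y - xbar))
      (fderiv ℝ (fderiv ℝ u) x + c • Phi _) x :=
    (hdiff x hx).2.hasFDerivAt.add ((hasFDerivAt_quad' xbar x).const_smul c)
  have hD2' : HasFDerivAt (fderiv ℝ w) (fderiv ℝ (fderiv ℝ u) x + c • Phi _) x :=
    hD2.congr_of_eventuallyEq hev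
  refine ⟨(hwD x hx).differentiableAt, hD2'.differentiableAt, ?_⟩
  unfold laplacian
  rw [hD2'.fderiv]
  have hsingle : ∀ i : Fin n,
      ⟪(EuclideanSpace.single i (1:ℝ)), EuclideanSpace.single i 1⟫_ℝ = 1 := by
    intro i
    rw [EuclideanSpace.inner_single_left]
    simp
  have hpt : ∀ i : Fin n,
      ((fderiv ℝ (fderiv ℝ u) x + c • Phi (EuclideanSpace ℝ (Fin n)))
        (EuclideanSpace.single i 1)) (EuclideanSpace.single i 1)
      = (fderiv ℝ (fderiv ℝ u) x (EuclideanSpace.single i 1)) (EuclideanSpace.single i 1)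
        + c * 2 := by
    intro i
    simp [hsingle i]
  rw [Finset.sum_congr rfl (fun i _ => hpt i), Finset.sum_add_distrib]
  simp only [Finset.sum_const, Finset.card_univ, Fintype.card_fin, nsmul_eq_mul]
  ring

/-- Comparison with the radial solution on an inscribed ball: a supersolution of
`Δu = −2` (i.e. `−Δ₂ᴺ u = 1`) which is nonnegative on `∂Ω` dominates the radial
solution `(R² − ‖x − x̄‖²)/n` on every ball `B(x̄, R) ⊆ Ω`. -/
theorem comparison_inscribed_ball
    {n : ℕ} (hn : 1 ≤ n) (Ω : Set (EuclideanSpace ℝ (Fin n)))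
    (hΩo : IsOpen Ω) (hΩb : Bornology.IsBounded Ω)
    (u : EuclideanSpace ℝ (Fin n) → ℝ)
    (hcont : ContinuousOn u (closure Ω))
    (hdiff : ∀ x ∈ Ω, DifferentiableAt ℝ u x ∧ DifferentiableAt ℝ (fderiv ℝ u) x)
    (hlap : ∀ x ∈ Ω, laplacian u x = -2)
    (hbdry : ∀ x ∈ frontier Ω, 0 ≤ u x)
    (xbar : EuclideanSpace ℝ (Fin n)) (R : ℝ) (hR : 0 < R)
    (hball : Metric.ball xbar R ⊆ Ω) :
    ∀ x ∈ Metric.closedBall xbar R, (R ^ 2 - ‖x - xbar‖ ^ 2) / n ≤ u x := by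
  haveI : Nonempty (Fin n) := ⟨⟨0, hn⟩⟩
  have hnpos : (0:ℝ) < n := by exact_mod_cast hn
  have hu0 : ∀ x ∈ closure Ω, 0 ≤ u x := by
    apply min_principle Ω hΩo hΩb u hcont hdiff _ hbdry
    intro x hx; rw [hlap x hx]; norm_num
  have hcb : Metric.closedBall xbar R ⊆ closure Ω := by
    rw [← closure_ball xbar hR.ne']
    exact closure_mono hball
  intro x hx
  set t : ℝ := ‖x - xbar‖ ^ 2 with ht
  have key : ∀ ε : ℝ, 0 < ε → (1 - ε) * ((R ^ 2 - t) / n) ≤ u x := by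
    intro ε hε
    set c : ℝ := (1 - ε) / n with hc
    set b : ℝ := -((1 - ε) * R ^ 2 / n) with hb
    set w : EuclideanSpace ℝ (Fin n) → ℝ :=
      fun y => u y + c * ⟪y - xbar, y - xbar⟫_ℝ + b with hwdef
    have hw := fun (y : EuclideanSpace ℝ (Fin n)) (hy : y ∈ Ω) =>
      shift_calc Ω hΩo u hdiff c b xbar hy
    have hqc : Continuous fun y : EuclideanSpace ℝ (Fin n) =>
        c * ⟪y - xbar, y - xbar⟫_ℝ + b :=
      (continuous_const.mul ((continuous_id.sub continuous_const).inner
        (continuous_id.sub continuous_const))).add continuous_const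
    have hres : ∀ z ∈ closure (Metric.ball xbar R), 0 ≤ w z := by
      apply min_principle (Metric.ball xbar R) isOpen_ball isBounded_ball w
      · have h1 : ContinuousOn u (closure (Metric.ball xbar R)) :=
          hcont.mono (by rw [closure_ball xbar hR.ne']; exact hcb)
        have hwe : w = fun y => u y + (c * ⟪y - xbar, y - xbar⟫_ℝ + b) := by
          funext y; ring
        rw [hwe]
        exact h1.add hqc.continuousOn
      · intro y hy
        exact ⟨(hw y (hball hy)).1, (hw y (hball hy)).2.1⟩
      · intro y hy
        rw [(hw y (hball hy)).2.2, hlap y (hball hy)]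
        have hcn : c * (2 * n) = 2 * (1 - ε) := by
          rw [hc]; field_simp
        rw [hcn]; linarith
      · intro y hy
        rw [frontier_ball xbar hR.ne'] at hy
        have hnorm : ‖y - xbar‖ = R := mem_sphere_iff_norm.1 hy
        have hq : ⟪y - xbar, y - xbar⟫_ℝ = R ^ 2 := by
          rw [real_inner_self_eq_norm_sq, hnorm]
        have hub : 0 ≤ u y := hu0 y (hcb (sphere_subset_closedBall hy))
        have hzero : c * R ^ 2 + b = 0 := by
          rw [hc, hb]; field_simp; ring
        show 0 ≤ u y + c * ⟪y - xbar, y - xbar⟫_ℝ + b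
        rw [hq]
        linarith
    have hx' : x ∈ closure (Metric.ball xbar R) := by
      rw [closure_ball xbar hR.ne']; exact hx
    have h0 := hres x hx'
    have hqx : ⟪x - xbar, x - xbar⟫_ℝ = t := by
      rw [real_inner_self_eq_norm_sq]
    rw [show w x = u x + c * ⟪x - xbar, x - xbar⟫_ℝ + b from rfl, hqx] at h0
    have heq : (1 - ε) * ((R ^ 2 - t) / n) = -(c * t + b) := by
      rw [hc, hb]; field_simp; ring
    rw [heq]
    linarith
  have htend : Tendsto (fun ε : ℝ => (1 - ε) * ((R ^ 2 - t) / n)) (𝓝[>] 0)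
      (𝓝 ((R ^ 2 - t) / n)) := by
    have hcont' : Continuous fun ε : ℝ => (1 - ε) * ((R ^ 2 - t) / n) :=
      (continuous_const.sub continuous_id).mul continuous_const
    have h0 : Tendsto (fun ε : ℝ => (1 - ε) * ((R ^ 2 - t) / n)) (𝓝 0)
        (𝓝 ((R ^ 2 - t) / n)) := by
      have := hcont'.tendsto 0
      simpa using this
    exact h0.mono_left nhdsWithin_le_nhds
  refine le_of_tendsto htend ?_
  filter_upwards [self_mem_nhdsWithin] with ε hε using key ε hε
end

section
/- Let n ≥ 1 and let Ω ⊆ ℝⁿ be a bounded open set. Let u be continuous on the closure of Ω, twice differentiable on Ω with Δu(x) = −2 for all x ∈ Ω, and suppose u = 0 on the frontier of Ω. If x̄ ∈ ℝⁿ and R > 0 are such that Ω is contained in the closed ball of radius R about x̄, then u(x) ≤ (R² − ‖x − x̄‖²)/n for every x in the closure of Ω. -/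
open Filter Topology Metric

theorem secondDerivTest {E : Type*} [NormedAddCommGroup E] [NormedSpace ℝ E]
    {f : E → ℝ} {x₀ : E}
    (hnbhd : ∀ᶠ y in 𝓝 x₀, DifferentiableAt ℝ f y)
    (hd2 : DifferentiableAt ℝ (fderiv ℝ f) x₀)
    (hmax : IsLocalMax f x₀) (v : E) :
    fderiv ℝ (fderiv ℝ f) x₀ v v ≤ 0 := by
  by_contra hc
  push_neg at hc
  set B := fderiv ℝ (fderiv ℝ f) x₀ with hB
  set g : ℝ → ℝ := fun t => f (x₀ + t • v) with hg
  set G : ℝ → ℝ := fun t => fderiv ℝ f (x₀ + t • v) v with hG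
  have hline : ∀ t : ℝ, HasDerivAt (fun s : ℝ => x₀ + s • v) v t := by
    intro t
    simpa using ((hasDerivAt_id t).smul_const v).const_add x₀
  -- g has derivative G t wherever f is differentiable
  have hgderiv : ∀ t : ℝ, DifferentiableAt ℝ f (x₀ + t • v) → HasDerivAt g (G t) t := by
    intro t ht
    exact ht.hasFDerivAt.comp_hasDerivAt t (hline t)
  -- G has derivative B v v at 0
  have hGd : HasDerivAt G (B v v) 0 := by
    have h1 : HasFDerivAt (fderiv ℝ f) B x₀ := hd2.hasFDerivAt
    have h1' : HasFDerivAt (fderiv ℝ f) B (x₀ + (0:ℝ) • v) := by simpa using h1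
    have h2 : HasDerivAt (fun t : ℝ => fderiv ℝ f (x₀ + t • v)) (B v) 0 := by
      have := h1'.comp_hasDerivAt 0 (hline 0)
      exact this
    have h3 := ((ContinuousLinearMap.apply ℝ ℝ v).hasFDerivAt).comp_hasDerivAt 0 h2
    exact h3
  have hG0 : G 0 = 0 := by
    simp [hG, hmax.fderiv_eq_zero]
  -- slope of G tends to B v v > 0
  have hslope : Tendsto (slope G 0) (𝓝[≠] (0:ℝ)) (𝓝 (B v v)) :=
    hasDerivAt_iff_tendsto_slope.1 hGd
  have hev1 : ∀ᶠ t in 𝓝[>] (0:ℝ), 0 < slope G 0 t := by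
    have h := hslope.eventually (eventually_gt_nhds hc)
    exact Eventually.filter_mono (nhdsWithin_mono _ (fun t (ht : t ∈ Set.Ioi (0:ℝ)) => ne_of_gt ht)) h
  have hev2 : ∀ᶠ t in 𝓝 (0:ℝ), DifferentiableAt ℝ f (x₀ + t • v) := by
    have hcont : ContinuousAt (fun t : ℝ => x₀ + t • v) 0 := (hline 0).continuousAt
    have h0 : (fun t : ℝ => x₀ + t • v) 0 = x₀ := by simp
    rw [← h0] at hnbhd
    exact hcont.eventually hnbhd
  have hev3 : ∀ᶠ t in 𝓝 (0:ℝ), g t ≤ g 0 := by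
    have hcont : ContinuousAt (fun t : ℝ => x₀ + t • v) 0 := (hline 0).continuousAt
    have hmax' : ∀ᶠ y in 𝓝 ((fun t : ℝ => x₀ + t • v) 0), f y ≤ f x₀ := by
      have hm : ∀ᶠ y in 𝓝 x₀, f y ≤ f x₀ := hmax
      simp only [zero_smul, add_zero]
      exact hm
    have := hcont.eventually hmax'
    simp only [hg]
    filter_upwards [this] with t ht
    simpa using ht
  have hev : ∀ᶠ t in 𝓝[>] (0:ℝ),
      0 < slope G 0 t ∧ DifferentiableAt ℝ f (x₀ + t • v) ∧ g t ≤ g 0 :=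
    hev1.and ((hev2.filter_mono nhdsWithin_le_nhds).and (hev3.filter_mono nhdsWithin_le_nhds))
  obtain ⟨δ, hδ, hIoo⟩ := (nhdsGT_basis (0:ℝ)).eventually_iff.1 hev
  set δ' := δ / 2 with hδ'
  have hδ'0 : 0 < δ' := half_pos hδ
  have hδ'δ : δ' < δ := half_lt_self hδ
  have hsub : Set.Ioo (0:ℝ) δ' ⊆ Set.Ioo 0 δ := Set.Ioo_subset_Ioo le_rfl hδ'δ.le
  -- differentiability on Icc 0 δ'
  have hdiffIcc : ∀ t ∈ Set.Icc (0:ℝ) δ', DifferentiableAt ℝ f (x₀ + t • v) := by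
    intro t ht
    rcases eq_or_lt_of_le ht.1 with h0 | h0
    · rw [← h0]; simpa using hnbhd.self_of_nhds
    · exact (hIoo ⟨h0, lt_of_le_of_lt ht.2 hδ'δ⟩).2.1
  have hmono : StrictMonoOn g (Set.Icc 0 δ') := by
    apply strictMonoOn_of_deriv_pos (convex_Icc 0 δ')
    · intro t ht
      exact ((hgderiv t (hdiffIcc t ht)).continuousAt).continuousWithinAt
    · intro t ht
      rw [interior_Icc] at ht
      have hmem := hIoo ⟨ht.1, lt_trans ht.2 hδ'δ⟩
      have hGt : 0 < G t := by
        have hs : 0 < G t / t := by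
          have := hmem.1
          rwa [slope_def_field, hG0, sub_zero, sub_zero] at this
        by_contra hle
        push_neg at hle
        have : G t / t ≤ 0 := div_nonpos_of_nonpos_of_nonneg hle ht.1.le
        linarith
      rw [(hgderiv t (hdiffIcc t (Set.mem_Icc_of_Ioo ht))).deriv]
      exact hGt
  have : g 0 < g δ' := hmono (Set.left_mem_Icc.2 hδ'0.le) (Set.right_mem_Icc.2 hδ'0.le) hδ'0
  have hle : g δ' ≤ g 0 := (hIoo ⟨hδ'0, hδ'δ⟩).2.2
  linarith


open RealInnerProductSpace in
theorem laplacian_shift {n : ℕ} (u : EuclideanSpace ℝ (Fin n) → ℝ)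
    (xbar : EuclideanSpace ℝ (Fin n)) (c : ℝ) (x : EuclideanSpace ℝ (Fin n))
    (hnb : ∀ᶠ y in 𝓝 x, DifferentiableAt ℝ u y)
    (hd2 : DifferentiableAt ℝ (fderiv ℝ u) x) :
    DifferentiableAt ℝ (fderiv ℝ (fun y => u y + c * ‖y - xbar‖ ^ 2)) x ∧
    laplacian (fun y => u y + c * ‖y - xbar‖ ^ 2) x = laplacian u x + n * (2 * c) := by
  let E := EuclideanSpace ℝ (Fin n)
  set L : E →L[ℝ] (E →L[ℝ] ℝ) := (2 * c) • innerSL ℝ with hL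
  set h : E → ℝ := fun y => u y + c * ‖y - xbar‖ ^ 2 with hh
  have hq : ∀ y : E, HasFDerivAt (fun z : E => c * ‖z - xbar‖ ^ 2) (L (y - xbar)) y := by
    intro y
    have h1 : HasFDerivAt (fun z : E => z - xbar) (ContinuousLinearMap.id ℝ E) y :=
      (hasFDerivAt_id y).sub_const xbar
    have h2 := (h1.norm_sq).const_mul c
    refine h2.congr_fderiv ?_
    ext v
    simp [hL, mul_comm, mul_assoc, mul_left_comm, real_inner_smul_left, innerSL_apply_apply]
    exact Or.inl rfl
  have hfderivh : ∀ y : E, DifferentiableAt ℝ u y →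
      fderiv ℝ h y = fderiv ℝ u y + L (y - xbar) := by
    intro y hy
    exact (hy.hasFDerivAt.add (hq y)).fderiv
  have heq : fderiv ℝ h =ᶠ[𝓝 x] fun y => fderiv ℝ u y + L (y - xbar) := by
    filter_upwards [hnb] with y hy using hfderivh y hy
  have hQd : HasFDerivAt (fun y : E => L (y - xbar)) L x := by
    have : HasFDerivAt (fun y : E => L y - L xbar) L x := L.hasFDerivAt.sub_const (L xbar)
    convert this using 2 with y
    simp [map_sub]
  have hsum : HasFDerivAt (fun y : E => fderiv ℝ u y + L (y - xbar))
      (fderiv ℝ (fderiv ℝ u) x + L) x := hd2.hasFDerivAt.add hQd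
  have hfh : fderiv ℝ (fderiv ℝ h) x = fderiv ℝ (fderiv ℝ u) x + L := by
    rw [heq.fderiv_eq]
    exact hsum.fderiv
  constructor
  · exact heq.differentiableAt_iff.mpr hsum.differentiableAt
  · unfold laplacian
    rw [hfh]
    have hcard : ∀ i : Fin n,
        L (EuclideanSpace.single i (1:ℝ)) (EuclideanSpace.single i (1:ℝ)) = 2 * c := by
      intro i
      have : ⟪(EuclideanSpace.single i (1:ℝ) : E), EuclideanSpace.single i (1:ℝ)⟫ = 1 := by
        rw [real_inner_self_eq_norm_sq]
        simp [EuclideanSpace.norm_single]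
      simp [hL, real_inner_smul_left, innerSL_apply_apply, this]
      exact (congrArg (fun t => 2 * c * t) this).trans (mul_one _)
    simp only [ContinuousLinearMap.add_apply]
    rw [Finset.sum_add_distrib]
    simp [hcard, mul_comm]

/-- Comparison with the radial solution on a circumscribed ball: a solution of
`Δu = −2` (i.e. `−Δ₂ᴺ u = 1`) vanishing on `∂Ω` is dominated by the radial
solution `(R² − ‖x − x̄‖²)/n` whenever `Ω ⊆ closedBall(x̄, R)`. -/
theorem comparison_circumscribed_ball
    {n : ℕ} (hn : 1 ≤ n) (Ω : Set (EuclideanSpace ℝ (Fin n)))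
    (hΩo : IsOpen Ω) (hΩb : Bornology.IsBounded Ω)
    (u : EuclideanSpace ℝ (Fin n) → ℝ)
    (hcont : ContinuousOn u (closure Ω))
    (hdiff : ∀ x ∈ Ω, DifferentiableAt ℝ u x ∧ DifferentiableAt ℝ (fderiv ℝ u) x)
    (hlap : ∀ x ∈ Ω, laplacian u x = -2)
    (hbdry : ∀ x ∈ frontier Ω, u x = 0)
    (xbar : EuclideanSpace ℝ (Fin n)) (R : ℝ) (hR : 0 < R)
    (hsub : Ω ⊆ Metric.closedBall xbar R) :
    ∀ x ∈ closure Ω, u x ≤ (R ^ 2 - ‖x - xbar‖ ^ 2) / n := by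
  let E := EuclideanSpace ℝ (Fin n)
  intro x hx
  have hnR : (0:ℝ) < n := by exact_mod_cast hn
  have hclsub : closure Ω ⊆ Metric.closedBall xbar R :=
    closure_minimal hsub Metric.isClosed_closedBall
  have hnormR : ∀ y ∈ closure Ω, ‖y - xbar‖ ≤ R := by
    intro y hy
    have := hclsub hy
    rwa [Metric.mem_closedBall, dist_eq_norm] at this
  -- key estimate for every ε > 0
  have key : ∀ ε : ℝ, 0 < ε → ∀ y ∈ closure Ω,
      u y + ((1 + ε) / n) * ‖y - xbar‖ ^ 2 ≤ ((1 + ε) / n) * R ^ 2 := by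
    intro ε hε
    set c : ℝ := (1 + ε) / n with hc
    have hcpos : 0 < c := div_pos (by linarith) hnR
    set h : E → ℝ := fun y => u y + c * ‖y - xbar‖ ^ 2 with hh
    have hconth : ContinuousOn h (closure Ω) := by
      apply hcont.add
      exact (Continuous.mul continuous_const
        (((continuous_id.sub continuous_const).norm).pow 2)).continuousOn
    obtain ⟨x₀, hx₀mem, hx₀max⟩ :=
      (hΩb.isCompact_closure).exists_isMaxOn ⟨x, hx⟩ hconth
    have hx₀not : x₀ ∉ Ω := by
      intro hmem
      have hnbh : ∀ᶠ y in 𝓝 x₀, DifferentiableAt ℝ u y := by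
        filter_upwards [hΩo.mem_nhds hmem] with y hy using (hdiff y hy).1
      obtain ⟨hd2h, hlaph⟩ := laplacian_shift u xbar c x₀ hnbh (hdiff x₀ hmem).2
      have hnbh' : ∀ᶠ y in 𝓝 x₀, DifferentiableAt ℝ h y := by
        filter_upwards [hnbh] with y hy
        exact hy.add ((differentiable_const c |>.mul
          (((differentiable_id.sub_const xbar).norm_sq (𝕜 := ℝ)))) y)
      have hlocmax : IsLocalMax h x₀ := by
        filter_upwards [hΩo.mem_nhds hmem] with y hy
        exact hx₀max (subset_closure hy)
      have hnonpos : laplacian h x₀ ≤ 0 := by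
        unfold laplacian
        apply Finset.sum_nonpos
        intro i _
        exact secondDerivTest hnbh' hd2h hlocmax _
      rw [hlaph, hlap x₀ hmem] at hnonpos
      have : -2 + (n:ℝ) * (2 * c) = 2 * ε := by
        rw [hc]
        field_simp
        ring
      rw [this] at hnonpos
      linarith
    have hx₀front : x₀ ∈ frontier Ω := by
      rw [frontier, hΩo.interior_eq]
      exact ⟨hx₀mem, hx₀not⟩
    have hux₀ : u x₀ = 0 := hbdry x₀ hx₀front
    have hhx₀ : h x₀ ≤ c * R ^ 2 := by
      have h1 : ‖x₀ - xbar‖ ^ 2 ≤ R ^ 2 :=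
        pow_le_pow_left₀ (norm_nonneg _) (hnormR x₀ hx₀mem) 2
      simp only [hh, hux₀, zero_add]
      exact mul_le_mul_of_nonneg_left h1 hcpos.le
    intro y hy
    exact le_trans (hx₀max hy) hhx₀
  -- pass to the limit ε → 0
  have hsq : 0 ≤ R ^ 2 - ‖x - xbar‖ ^ 2 := by
    have h1 : ‖x - xbar‖ ^ 2 ≤ R ^ 2 := pow_le_pow_left₀ (norm_nonneg _) (hnormR x hx) 2
    linarith
  apply le_of_forall_pos_le_add
  intro ε' hε'
  set ε : ℝ := ε' * n / R ^ 2 with hεdef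
  have hεpos : 0 < ε := div_pos (mul_pos hε' hnR) (pow_pos hR 2)
  have hk := key ε hεpos x hx
  have hεR : ε * R ^ 2 / n = ε' := by
    rw [hεdef]
    field_simp
  have hbound : u x ≤ (R ^ 2 - ‖x - xbar‖ ^ 2) / n + ε * R ^ 2 / n := by
    have expand : ((1 + ε) / n) * R ^ 2 - ((1 + ε) / n) * ‖x - xbar‖ ^ 2
        = (R ^ 2 - ‖x - xbar‖ ^ 2) / n + ε * (R ^ 2 - ‖x - xbar‖ ^ 2) / n := by ring
    have h2 : ε * (R ^ 2 - ‖x - xbar‖ ^ 2) / n ≤ ε * R ^ 2 / n := by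
      have hAB : ε * (R ^ 2 - ‖x - xbar‖ ^ 2) ≤ ε * R ^ 2 := by
        nlinarith [sq_nonneg ‖x - xbar‖]
      exact (div_le_div_iff_of_pos_right hnR).mpr hAB
    nlinarith [hk]
  rw [hεR] at hbound
  exact hbound
end

section
/- Let n ≥ 1 and let Ω ⊆ ℝⁿ be a nonempty bounded open set. Let u be continuous on the closure of Ω, twice differentiable on Ω with Δu(x) = −2 for all x ∈ Ω, and suppose u = 0 on the frontier of Ω. Then u(x) > 0 for every x ∈ Ω. -/
open Filter Topology Metric

/-- One-dimensional lemma: a function with a local min at `0`, differentiable on a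
neighborhood of `0`, cannot have negative second derivative at `0`. -/
lemma onedim_no_min {g g' : ℝ → ℝ} {U : Set ℝ} (hU : IsOpen U) (h0 : (0:ℝ) ∈ U)
    (hg : ∀ t ∈ U, HasDerivAt g (g' t) t) (hmin : IsLocalMin g 0)
    {c : ℝ} (hc : c < 0) (hd : HasDerivAt g' c 0) : False := by
  have hg'0 : g' 0 = 0 := by
    have h1 : deriv g 0 = 0 := hmin.deriv_eq_zero
    have h2 : deriv g 0 = g' 0 := (hg 0 h0).deriv
    linarith [h2 ▸ h1]
  -- slope of g' tends to c < 0 along 𝓝[>] 0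
  have hslope : Tendsto (slope g' 0) (𝓝[≠] (0:ℝ)) (𝓝 c) :=
    hasDerivAt_iff_tendsto_slope.mp hd
  have hslope' : Tendsto (slope g' 0) (𝓝[>] (0:ℝ)) (𝓝 c) :=
    hslope.mono_left (nhdsWithin_mono _ (fun t ht => ne_of_gt ht))
  have hev : ∀ᶠ t in 𝓝[>] (0:ℝ), g' t < 0 := by
    filter_upwards [hslope'.eventually (gt_mem_nhds hc), self_mem_nhdsWithin] with t hts ht
    have hts' : (g' t - g' 0) / (t - 0) < 0 := by rwa [slope_def_field] at hts
    rw [hg'0, sub_zero, sub_zero] at hts'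
    have ht' : (0:ℝ) < t := ht
    nlinarith [mul_pos ht' (neg_pos.mpr hts'), div_mul_cancel₀ (g' t) (ne_of_gt ht')]
  obtain ⟨ε₁, hε₁pos, hε₁⟩ := (mem_nhdsGT_iff_exists_Ioo_subset).mp hev
  obtain ⟨δ₁, hδ₁pos, hδ₁⟩ := Metric.isOpen_iff.mp hU 0 h0
  obtain ⟨δ₂, hδ₂pos, hδ₂⟩ := Metric.eventually_nhds_iff.mp hmin
  set ε : ℝ := min ε₁ (min δ₁ δ₂) / 2 with hε
  have hmpos : 0 < min ε₁ (min δ₁ δ₂) := lt_min hε₁pos (lt_min hδ₁pos hδ₂pos)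
  have hεpos : 0 < ε := by rw [hε]; linarith
  have hεlt₁ : ε < ε₁ := by
    have := min_le_left ε₁ (min δ₁ δ₂); rw [hε]; linarith
  have hεlt₂ : ε < δ₁ := by
    have := (min_le_right ε₁ (min δ₁ δ₂)).trans (min_le_left δ₁ δ₂); rw [hε]; linarith
  have hεlt₃ : ε < δ₂ := by
    have := (min_le_right ε₁ (min δ₁ δ₂)).trans (min_le_right δ₁ δ₂); rw [hε]; linarith
  have hsub : Set.Icc (0:ℝ) ε ⊆ U := by
    intro t ht
    apply hδ₁
    rw [Metric.mem_ball, Real.dist_eq, sub_zero, abs_of_nonneg ht.1]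
    linarith [ht.2]
  have hanti : StrictAntiOn g (Set.Icc (0:ℝ) ε) := by
    apply strictAntiOn_of_deriv_neg (convex_Icc _ _)
    · exact fun t ht => ((hg t (hsub ht)).continuousAt).continuousWithinAt
    · intro t ht
      rw [interior_Icc] at ht
      rw [(hg t (hsub ⟨le_of_lt ht.1, le_of_lt ht.2⟩)).deriv]
      exact hε₁ ⟨ht.1, ht.2.trans hεlt₁⟩
  have h1 : g ε < g 0 := hanti (Set.left_mem_Icc.mpr hεpos.le) (Set.right_mem_Icc.mpr hεpos.le) hεpos
  have h2 : g 0 ≤ g ε := by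
    apply hδ₂
    rw [Real.dist_eq, sub_zero, abs_of_pos hεpos]
    exact hεlt₃
  linarith

/-- No interior minimum for a function with `Δu = -2`. -/
lemma no_interior_min {n : ℕ} {Ω : Set (EuclideanSpace ℝ (Fin n))}
    (hΩo : IsOpen Ω) {u : EuclideanSpace ℝ (Fin n) → ℝ}
    (hdiff : ∀ x ∈ Ω, DifferentiableAt ℝ u x ∧ DifferentiableAt ℝ (fderiv ℝ u) x)
    (hlap : ∀ x ∈ Ω, laplacian u x = -2)
    {x₀ : EuclideanSpace ℝ (Fin n)} (hx₀ : x₀ ∈ Ω)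
    (hmin : IsMinOn u (closure Ω) x₀) : False := by
  -- some diagonal second derivative is negative
  have hsum : ∑ i : Fin n,
      fderiv ℝ (fderiv ℝ u) x₀ (EuclideanSpace.single i 1) (EuclideanSpace.single i 1)
      = -2 := hlap x₀ hx₀
  have hexi : ∃ i : Fin n,
      fderiv ℝ (fderiv ℝ u) x₀ (EuclideanSpace.single i 1) (EuclideanSpace.single i 1) < 0 := by
    by_contra h
    push_neg at h
    have : (0:ℝ) ≤ ∑ i : Fin n,
        fderiv ℝ (fderiv ℝ u) x₀ (EuclideanSpace.single i 1) (EuclideanSpace.single i 1) :=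
      Finset.sum_nonneg fun i _ => h i
    linarith [hsum ▸ this]
  obtain ⟨i, hi⟩ := hexi
  set e : EuclideanSpace ℝ (Fin n) := EuclideanSpace.single i 1 with he
  -- the line through x₀ in direction e
  set L : ℝ → EuclideanSpace ℝ (Fin n) := fun t => x₀ + t • e with hL
  have hLcont : Continuous L := by fun_prop
  have hL0 : L 0 = x₀ := by simp [hL]
  set U : Set ℝ := L ⁻¹' Ω with hUdef
  have hUopen : IsOpen U := hΩo.preimage hLcont
  have h0U : (0:ℝ) ∈ U := by simp [hUdef, hL0, hx₀]
  have hline : ∀ t : ℝ, HasDerivAt L e t := by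
    intro t
    simpa [hL] using ((hasDerivAt_id t).smul_const e).const_add x₀
  -- derivative of g along the line
  have hg : ∀ t ∈ U, HasDerivAt (fun s => u (L s)) (fderiv ℝ u (L t) e) t := by
    intro t ht
    exact ((hdiff (L t) ht).1.hasFDerivAt).comp_hasDerivAt t (hline t)
  -- second derivative
  have hd : HasDerivAt (fun t => fderiv ℝ u (L t) e)
      (fderiv ℝ (fderiv ℝ u) x₀ e e) 0 := by
    have hA : HasFDerivAt (fun y => fderiv ℝ u y e)
        ((ContinuousLinearMap.apply ℝ ℝ e).comp (fderiv ℝ (fderiv ℝ u) x₀)) x₀ :=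
      (ContinuousLinearMap.apply ℝ ℝ e).hasFDerivAt.comp x₀ (hdiff x₀ hx₀).2.hasFDerivAt
    rw [← hL0] at hA
    have := hA.comp_hasDerivAt 0 (hline 0)
    rw [hL0] at this
    exact this
  -- local min of g at 0
  have hlocmin : IsLocalMin (fun s => u (L s)) 0 := by
    have hU𝓝 : U ∈ 𝓝 (0:ℝ) := hUopen.mem_nhds h0U
    filter_upwards [hU𝓝] with t ht
    have : u x₀ ≤ u (L t) := hmin (subset_closure ht)
    simpa [hL0] using this
  exact onedim_no_min hUopen h0U hg hlocmin hi hd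

/-- Positivity lemma in the classical setting `p = 2`: a solution of `Δu = −2`
(i.e. `−Δ₂ᴺ u = 1`) vanishing on `∂Ω` is positive in `Ω`. -/
theorem positivity_of_solution
    {n : ℕ} (hn : 1 ≤ n) (Ω : Set (EuclideanSpace ℝ (Fin n)))
    (hΩo : IsOpen Ω) (hΩb : Bornology.IsBounded Ω) (hΩne : Ω.Nonempty)
    (u : EuclideanSpace ℝ (Fin n) → ℝ)
    (hcont : ContinuousOn u (closure Ω))
    (hdiff : ∀ x ∈ Ω, DifferentiableAt ℝ u x ∧ DifferentiableAt ℝ (fderiv ℝ u) x)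
    (hlap : ∀ x ∈ Ω, laplacian u x = -2)
    (hbdry : ∀ x ∈ frontier Ω, u x = 0) :
    ∀ x ∈ Ω, 0 < u x := by
  have hcomp : IsCompact (closure Ω) :=
    Metric.isCompact_of_isClosed_isBounded isClosed_closure hΩb.closure
  obtain ⟨x₀, hx₀mem, hx₀min⟩ := hcomp.exists_isMinOn hΩne.closure hcont
  have hx₀front : x₀ ∈ frontier Ω := by
    by_contra h
    have hx₀Ω : x₀ ∈ Ω := by
      rcases (closure_eq_self_union_frontier Ω ▸ hx₀mem) with h1 | h1
      · exact h1
      · exact absurd h1 h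
    exact no_interior_min hΩo hdiff hlap hx₀Ω hx₀min
  have hmin0 : u x₀ = 0 := hbdry x₀ hx₀front
  intro x hx
  have hge : 0 ≤ u x := hmin0 ▸ hx₀min (subset_closure hx)
  rcases lt_or_eq_of_le hge with h | h
  · exact h
  · exfalso
    apply no_interior_min hΩo hdiff hlap hx
    intro y hy
    calc u x = u x₀ := by rw [hmin0, ← h]
    _ ≤ u y := hx₀min hy
end

section
/- Let n ≥ 1 and let Ω ⊆ ℝⁿ be a bounded open set. Let u be continuous on the closure of Ω, twice differentiable on Ω with Δu(x) = −2 for all x ∈ Ω, and suppose u = 0 on the frontier of Ω. Suppose x̄ ∈ ℝⁿ and R > 0 are such that Ω is contained in the closed ball of radius R about x̄, and let P be a point of the frontier of Ω with ‖P − x̄‖ = R. Then limsup over y → P with y ∈ Ω of u(y)/‖y − P‖ is at most 2R/n. -/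
open Filter Topology Metric
open scoped InnerProductSpace

/-- One-dimensional second derivative test at a local maximum. -/
lemma sdt_max {φ s : ℝ → ℝ} {m : ℝ}
    (hφ : ∀ᶠ t in 𝓝 (0:ℝ), HasDerivAt φ (s t) t)
    (hs : HasDerivAt s m 0) (hmax : IsLocalMax φ 0) : m ≤ 0 := by
  by_contra h
  push_neg at h
  have hs0 : s 0 = 0 := hmax.hasDerivAt_eq_zero hφ.self_of_nhds
  have hslope : Tendsto (slope s 0) (𝓝[≠] (0:ℝ)) (𝓝 m) := hasDerivAt_iff_tendsto_slope.1 hs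
  have hpos : ∀ᶠ t in 𝓝[>] (0:ℝ), 0 < s t := by
    have h1 : ∀ᶠ t in 𝓝[>] (0:ℝ), 0 < slope s 0 t :=
      (hslope.mono_left (nhdsWithin_mono _ fun t ht => ne_of_gt ht)).eventually
        (eventually_gt_nhds h)
    filter_upwards [h1, self_mem_nhdsWithin] with t ht ht0
    have hsl : slope s 0 t = t⁻¹ * s t := by simp [slope, hs0]
    rw [hsl] at ht
    have ht0' : (0:ℝ) < t := ht0
    nlinarith [mul_pos ht0' ht, mul_inv_cancel₀ (ne_of_gt ht0')]
  obtain ⟨δ₁, hδ₁, hd⟩ := Metric.eventually_nhds_iff.1 hφ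
  obtain ⟨δ₂, hδ₂, hp⟩ := Metric.eventually_nhds_iff.1 (eventually_nhdsWithin_iff.1 hpos)
  obtain ⟨δ₃, hδ₃, hm⟩ := Metric.eventually_nhds_iff.1 hmax
  set δ := min δ₁ (min δ₂ δ₃) / 2 with hδdef
  have hδpos : 0 < δ := by positivity
  have hδ1 : δ < δ₁ := by
    have := min_le_left δ₁ (min δ₂ δ₃); simp only [hδdef]; linarith
  have hδ2 : δ < δ₂ := by
    have h1 := min_le_right δ₁ (min δ₂ δ₃); have h2 := min_le_left δ₂ δ₃
    simp only [hδdef]; linarith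
  have hδ3 : δ < δ₃ := by
    have h1 := min_le_right δ₁ (min δ₂ δ₃); have h2 := min_le_right δ₂ δ₃
    simp only [hδdef]; linarith
  have hmono : StrictMonoOn φ (Set.Icc 0 δ) := by
    apply strictMonoOn_of_hasDerivWithinAt_pos (convex_Icc 0 δ) _ (f' := s)
    · intro t ht
      rw [interior_Icc] at ht
      refine (hd ?_).hasDerivWithinAt
      rw [Real.dist_eq, sub_zero, abs_of_pos ht.1]; exact lt_trans ht.2 hδ1
    · intro t ht
      rw [interior_Icc] at ht
      exact hp (by rw [Real.dist_eq, sub_zero, abs_of_pos ht.1]; exact lt_trans ht.2 hδ2) ht.1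
    · intro t ht
      refine ((hd ?_).continuousAt.continuousWithinAt)
      rw [Real.dist_eq, sub_zero, abs_of_nonneg ht.1]; exact lt_of_le_of_lt ht.2 hδ1
  have h1 : φ 0 < φ δ :=
    hmono (Set.left_mem_Icc.2 hδpos.le) (Set.right_mem_Icc.2 hδpos.le) hδpos
  have h2 : φ δ ≤ φ 0 := hm (by rw [Real.dist_eq, sub_zero, abs_of_pos hδpos]; exact hδ3)
  linarith

/-- Second derivative test along a direction, at an interior local maximum. -/
lemma sdt_max_dir {n : ℕ} {g : EuclideanSpace ℝ (Fin n) → ℝ}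
    {Ω : Set (EuclideanSpace ℝ (Fin n))} (hΩo : IsOpen Ω)
    {x₀ : EuclideanSpace ℝ (Fin n)} (hx₀ : x₀ ∈ Ω)
    (hg1 : ∀ x ∈ Ω, DifferentiableAt ℝ g x)
    (hg2 : DifferentiableAt ℝ (fderiv ℝ g) x₀)
    (hmax : IsLocalMax g x₀) (e : EuclideanSpace ℝ (Fin n)) :
    fderiv ℝ (fderiv ℝ g) x₀ e e ≤ 0 := by
  set ℓ : ℝ → EuclideanSpace ℝ (Fin n) := fun t => x₀ + t • e with hℓdef
  have hℓ0 : ℓ 0 = x₀ := by simp [hℓdef]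
  have hℓd : ∀ t, HasDerivAt ℓ e t := by
    intro t
    simpa [hℓdef] using ((hasDerivAt_id t).smul_const e).const_add x₀
  have hℓc : Continuous ℓ := by continuity
  have hmem : ∀ᶠ t in 𝓝 (0:ℝ), ℓ t ∈ Ω := by
    have : Ω ∈ 𝓝 (ℓ 0) := hΩo.mem_nhds (hℓ0 ▸ hx₀)
    exact (hℓc.tendsto 0).eventually this
  have hφ : ∀ᶠ t in 𝓝 (0:ℝ), HasDerivAt (g ∘ ℓ) (fderiv ℝ g (ℓ t) e) t := by
    filter_upwards [hmem] with t ht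
    exact (hg1 _ ht).hasFDerivAt.comp_hasDerivAt t (hℓd t)
  have hs : HasDerivAt (fun t => fderiv ℝ g (ℓ t) e) (fderiv ℝ (fderiv ℝ g) x₀ e e) 0 := by
    have hcomp : HasDerivAt (fun t => fderiv ℝ g (ℓ t)) (fderiv ℝ (fderiv ℝ g) x₀ e) 0 := by
      have h := (hℓ0 ▸ hg2.hasFDerivAt :
        HasFDerivAt (fderiv ℝ g) (fderiv ℝ (fderiv ℝ g) x₀) (ℓ 0)).comp_hasDerivAt 0 (hℓd 0)
      exact h
    have := hcomp.clm_apply (hasDerivAt_const 0 e)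
    simpa using this
  have hmaxφ : IsLocalMax (g ∘ ℓ) 0 := by
    have : Tendsto ℓ (𝓝 0) (𝓝 x₀) := hℓ0 ▸ hℓc.tendsto 0
    have h2 := this.eventually hmax
    filter_upwards [h2] with t ht
    simpa [hℓ0] using ht
  exact sdt_max hφ hs hmaxφ

lemma q_hasFDerivAt {n : ℕ} (c x : EuclideanSpace ℝ (Fin n)) :
    HasFDerivAt (fun y => ‖y - c‖^2) ((2:ℝ) • (innerSL ℝ (x - c))) x := by
  have h : HasFDerivAt (fun y : EuclideanSpace ℝ (Fin n) => y - c)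
      (ContinuousLinearMap.id ℝ _) x := (hasFDerivAt_id x).sub_const c
  have key := h.inner ℝ h
  have hfun : (fun y : EuclideanSpace ℝ (Fin n) => ‖y - c‖^2)
      = fun y => ⟪y - c, y - c⟫_ℝ := by
    funext y; rw [← real_inner_self_eq_norm_sq]
  have hCLM : ((fderivInnerCLM ℝ (x - c, x - c)).comp
      ((ContinuousLinearMap.id ℝ (EuclideanSpace ℝ (Fin n))).prod
        (ContinuousLinearMap.id ℝ (EuclideanSpace ℝ (Fin n)))))
      = (2:ℝ) • (innerSL ℝ (x - c)) := by
    ext v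
    simp only [ContinuousLinearMap.comp_apply, ContinuousLinearMap.prod_apply,
      ContinuousLinearMap.id_apply, fderivInnerCLM_apply, ContinuousLinearMap.smul_apply,
      innerSL_apply_apply, smul_eq_mul]
    rw [real_inner_comm v (x - c)]
    ring
  rw [hfun, ← hCLM]
  exact key

/-- The constant bilinear form `2⟪·,·⟫`. -/
noncomputable def twoInner (n : ℕ) : EuclideanSpace ℝ (Fin n) →L[ℝ]
    EuclideanSpace ℝ (Fin n) →L[ℝ] ℝ :=
  (2:ℝ) • (innerSL ℝ : EuclideanSpace ℝ (Fin n) →L[ℝ] EuclideanSpace ℝ (Fin n) →L[ℝ] ℝ)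

lemma twoInner_apply {n : ℕ} (v w : EuclideanSpace ℝ (Fin n)) :
    twoInner n v w = 2 * ⟪v, w⟫_ℝ := rfl

lemma q_fderiv_hasFDerivAt {n : ℕ} (c x : EuclideanSpace ℝ (Fin n)) :
    HasFDerivAt (fun y : EuclideanSpace ℝ (Fin n) => (2:ℝ) • (innerSL ℝ (y - c)))
      (twoInner n) x := by
  rw [twoInner]
  have h : HasFDerivAt (fun y : EuclideanSpace ℝ (Fin n) => y - c)
      (ContinuousLinearMap.id ℝ _) x := (hasFDerivAt_id x).sub_const c
  have key := (((2:ℝ) • (innerSL ℝ : EuclideanSpace ℝ (Fin n) →L[ℝ]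
      EuclideanSpace ℝ (Fin n) →L[ℝ] ℝ)).hasFDerivAt).comp x h
  have key2 : HasFDerivAt (fun y => (2:ℝ) • (innerSL ℝ (y - c)))
      ((((2:ℝ) • (innerSL ℝ : EuclideanSpace ℝ (Fin n) →L[ℝ]
        EuclideanSpace ℝ (Fin n) →L[ℝ] ℝ))).comp (ContinuousLinearMap.id ℝ _)) x := key
  simpa using key2

/-- Maximum-principle comparison with the quadratic barrier. -/
lemma barrier_bound
    {n : ℕ} (hn : 1 ≤ n) (Ω : Set (EuclideanSpace ℝ (Fin n)))
    (hΩo : IsOpen Ω) (hΩb : Bornology.IsBounded Ω)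
    (u : EuclideanSpace ℝ (Fin n) → ℝ)
    (hcont : ContinuousOn u (closure Ω))
    (hdiff : ∀ x ∈ Ω, DifferentiableAt ℝ u x ∧ DifferentiableAt ℝ (fderiv ℝ u) x)
    (hlap : ∀ x ∈ Ω, laplacian u x = -2)
    (hbdry : ∀ x ∈ frontier Ω, u x = 0)
    (xbar : EuclideanSpace ℝ (Fin n)) (R : ℝ)
    (hsub : Ω ⊆ Metric.closedBall xbar R)
    (hne : Ω.Nonempty) (δ : ℝ) (hδ : 0 < δ) :
    ∀ y ∈ Ω, u y ≤ ((1+δ)/n) * (R^2 - ‖y - xbar‖^2) := by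
  have hn0 : (0:ℝ) < n := by exact_mod_cast hn
  set c : ℝ := (1+δ)/n with hc_def
  have hc : 0 < c := by positivity
  set g : EuclideanSpace ℝ (Fin n) → ℝ := fun y => u y + c * ‖y - xbar‖^2 with hg_def
  -- derivative data for g on Ω
  have hgD : ∀ x ∈ Ω, HasFDerivAt g
      (fderiv ℝ u x + c • ((2:ℝ) • (innerSL ℝ (x - xbar)))) x := by
    intro x hx
    exact ((hdiff x hx).1.hasFDerivAt).add ((q_hasFDerivAt xbar x).const_mul c)
  have hfe : ∀ x ∈ Ω, fderiv ℝ g x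
      = fderiv ℝ u x + c • ((2:ℝ) • (innerSL ℝ (x - xbar))) := fun x hx => (hgD x hx).fderiv
  have hgdiff : ∀ x ∈ Ω, DifferentiableAt ℝ g x := fun x hx => (hgD x hx).differentiableAt
  -- second derivative of g on Ω
  have hsecond : ∀ x ∈ Ω, fderiv ℝ (fderiv ℝ g) x
        = fderiv ℝ (fderiv ℝ u) x + c • twoInner n
      ∧ DifferentiableAt ℝ (fderiv ℝ g) x := by
    intro x hx
    have hev : fderiv ℝ g =ᶠ[𝓝 x]
        (fun y => fderiv ℝ u y + c • ((2:ℝ) • (innerSL ℝ (y - xbar)))) :=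
      eventually_of_mem (hΩo.mem_nhds hx) (fun y hy => hfe y hy)
    have h2 : HasFDerivAt (fun y => fderiv ℝ u y + c • ((2:ℝ) • (innerSL ℝ (y - xbar))))
        (fderiv ℝ (fderiv ℝ u) x + c • twoInner n) x :=
      ((hdiff x hx).2.hasFDerivAt).add ((q_fderiv_hasFDerivAt xbar x).const_smul c)
    refine ⟨?_, ?_⟩
    · rw [hev.fderiv_eq, h2.fderiv]
    · exact (hev.differentiableAt_iff).2 h2.differentiableAt
  -- Laplacian of g is positive on Ω
  have hlapg : ∀ x ∈ Ω, laplacian g x = 2 * δ := by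
    intro x hx
    have := (hsecond x hx).1
    unfold laplacian
    rw [this]
    have hterm : ∀ i : Fin n,
        (fderiv ℝ (fderiv ℝ u) x + c • twoInner n)
          (EuclideanSpace.single i 1) (EuclideanSpace.single i 1)
        = fderiv ℝ (fderiv ℝ u) x (EuclideanSpace.single i 1) (EuclideanSpace.single i 1)
          + c * 2 := by
      intro i
      have hinner : ⟪(EuclideanSpace.single i (1:ℝ) : EuclideanSpace ℝ (Fin n)),
          EuclideanSpace.single i 1⟫_ℝ = 1 := by
        rw [EuclideanSpace.inner_single_left]
        simp
      simp [ContinuousLinearMap.add_apply, ContinuousLinearMap.smul_apply, twoInner_apply,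
        hinner, smul_eq_mul]
    rw [Finset.sum_congr rfl (fun i _ => hterm i), Finset.sum_add_distrib]
    have h1 : ∑ i : Fin n, fderiv ℝ (fderiv ℝ u) x (EuclideanSpace.single i 1)
        (EuclideanSpace.single i 1) = -2 := hlap x hx
    rw [h1]
    simp only [Finset.sum_const, Finset.card_univ, Fintype.card_fin, nsmul_eq_mul]
    field_simp [hc_def]
    have hnc : (n:ℝ) * c = 1 + δ := by rw [hc_def]; field_simp
    linarith
  -- maximum of g on the compact closure
  have hcomp : IsCompact (closure Ω) :=
    Metric.isCompact_of_isClosed_isBounded isClosed_closure hΩb.closure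
  have hgc : ContinuousOn g (closure Ω) := by
    apply hcont.add
    exact (continuous_const.mul ((continuous_id.sub continuous_const).norm.pow 2)).continuousOn
  obtain ⟨x₀, hx₀m, hx₀max⟩ := hcomp.exists_isMaxOn hne.closure hgc
  -- the max point is on the frontier
  have hx₀f : x₀ ∈ frontier Ω := by
    by_cases hx₀Ω : x₀ ∈ Ω
    swap
    · rw [hΩo.frontier_eq]; exact ⟨hx₀m, hx₀Ω⟩
    exfalso
    have hloc : IsLocalMax g x₀ := by
      filter_upwards [hΩo.mem_nhds hx₀Ω] with y hy
      exact hx₀max (subset_closure hy)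
    have hnonpos : laplacian g x₀ ≤ 0 := by
      unfold laplacian
      refine Finset.sum_nonpos (fun i _ => ?_)
      exact sdt_max_dir hΩo hx₀Ω hgdiff (hsecond x₀ hx₀Ω).2 hloc _
    rw [hlapg x₀ hx₀Ω] at hnonpos
    linarith
  -- bound on the frontier
  have hx₀ball : ‖x₀ - xbar‖ ≤ R := by
    have : closure Ω ⊆ Metric.closedBall xbar R :=
      closure_minimal hsub Metric.isClosed_closedBall
    exact mem_closedBall_iff_norm.1 (this hx₀m)
  have hRpos : 0 ≤ R := le_trans (norm_nonneg _) hx₀ball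
  have hgx₀ : g x₀ ≤ c * R^2 := by
    have hu0 : u x₀ = 0 := hbdry x₀ hx₀f
    have hgx : g x₀ = c * ‖x₀ - xbar‖^2 := by rw [hg_def]; simp [hu0]
    have hsq : ‖x₀ - xbar‖^2 ≤ R^2 := by nlinarith [norm_nonneg (x₀ - xbar)]
    rw [hgx]
    exact mul_le_mul_of_nonneg_left hsq hc.le
  intro y hy
  have := hx₀max (subset_closure hy)
  have hgy : g y ≤ c * R^2 := le_trans this hgx₀
  rw [hg_def] at hgy
  simp only [hc_def] at *
  nlinarith [hgy]

/-- Upper Neumann bound at a farthest boundary point: `−∂u/∂ν ≤ 2R/n`, encoded via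
the limsup of `u(y)/‖y − P‖` as `y → P` inside `Ω`. -/
theorem upper_neumann_bound
    {n : ℕ} (hn : 1 ≤ n) (Ω : Set (EuclideanSpace ℝ (Fin n)))
    (hΩo : IsOpen Ω) (hΩb : Bornology.IsBounded Ω)
    (u : EuclideanSpace ℝ (Fin n) → ℝ)
    (hcont : ContinuousOn u (closure Ω))
    (hdiff : ∀ x ∈ Ω, DifferentiableAt ℝ u x ∧ DifferentiableAt ℝ (fderiv ℝ u) x)
    (hlap : ∀ x ∈ Ω, laplacian u x = -2)
    (hbdry : ∀ x ∈ frontier Ω, u x = 0)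
    (xbar : EuclideanSpace ℝ (Fin n)) (R : ℝ) (hR : 0 < R)
    (hsub : Ω ⊆ Metric.closedBall xbar R)
    (P : EuclideanSpace ℝ (Fin n)) (hPf : P ∈ frontier Ω)
    (hPR : ‖P - xbar‖ = R) :
    Filter.limsup (fun y => u y / ‖y - P‖) (𝓝[Ω] P) ≤ 2 * R / n := by
  have hn0 : (0:ℝ) < n := by exact_mod_cast hn
  have hne : Ω.Nonempty := by
    by_contra h
    rw [Set.not_nonempty_iff_eq_empty] at h
    rw [h] at hPf
    simp at hPf
  have hPnotΩ : P ∉ Ω := by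
    rw [hΩo.frontier_eq] at hPf
    exact hPf.2
  haveI hNB : (𝓝[Ω] P).NeBot :=
    mem_closure_iff_nhdsWithin_neBot.1 (frontier_subset_closure hPf)
  refine le_of_forall_pos_le_add (fun ε hε => ?_)
  set δ : ℝ := ε * n / (2 * R) with hδ_def
  have hδ : 0 < δ := by positivity
  set c : ℝ := (1 + δ)/n with hc_def
  have hc : 0 < c := by positivity
  have hcR : 2 * R * c = 2 * R / n + ε := by
    rw [hc_def, hδ_def]
    field_simp
  have hbound : ∀ y ∈ Ω, u y / ‖y - P‖ ≤ 2 * R * c := by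
    intro y hy
    have hyP : y ≠ P := fun h => hPnotΩ (h ▸ hy)
    have hpos : 0 < ‖y - P‖ := by
      rw [norm_pos_iff]
      exact sub_ne_zero.2 hyP
    rw [div_le_iff₀ hpos]
    have h1 := barrier_bound hn Ω hΩo hΩb u hcont hdiff hlap hbdry xbar R hsub hne δ hδ y hy
    have h2 : ‖y - xbar‖ ≤ R := mem_closedBall_iff_norm.1 (hsub hy)
    have h3 : R - ‖y - xbar‖ ≤ ‖y - P‖ := by
      have htri : ‖P - xbar‖ ≤ ‖P - y‖ + ‖y - xbar‖ := by
        have : P - xbar = (P - y) + (y - xbar) := by abel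
        rw [this]; exact norm_add_le _ _
      rw [hPR] at htri
      rw [norm_sub_rev y P]
      linarith
    have hkey : R^2 - ‖y - xbar‖^2 ≤ 2 * R * ‖y - P‖ := by
      nlinarith [norm_nonneg (y - P), norm_nonneg (y - xbar)]
    calc u y ≤ c * (R^2 - ‖y - xbar‖^2) := h1
      _ ≤ c * (2 * R * ‖y - P‖) := mul_le_mul_of_nonneg_left hkey hc.le
      _ = 2 * R * c * ‖y - P‖ := by ring
  have hev : ∀ᶠ y in 𝓝[Ω] P, u y / ‖y - P‖ ≤ 2 * R * c :=
    eventually_nhdsWithin_of_forall hbound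
  rw [Filter.limsup_eq]
  by_cases hbdd : BddBelow {a : ℝ | ∀ᶠ y in 𝓝[Ω] P, u y / ‖y - P‖ ≤ a}
  · calc sInf {a : ℝ | ∀ᶠ y in 𝓝[Ω] P, u y / ‖y - P‖ ≤ a} ≤ 2 * R * c :=
          csInf_le hbdd hev
      _ = 2 * R / n + ε := hcR
  · rw [Real.sInf_of_not_bddBelow hbdd]
    positivity
end
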